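/- Let ε ∼ N(0,1), μ̄ ∈ ℝ, σ̄ > 0, and let φ_b(x) = max(0, x−b) − max(0, −x−b). Then sup over b ≥ 0 of E[φ_b(μ̄ + σ̄ε)] equals max(μ̄, 0). In particular, if μ̄ > 0 the supremum is attained at b = 0; if μ̄ < 0 the supremum is approached as b → ∞ and equals 0; if μ̄ = 0 the expectation is 0 for all b. -/

import Mathlib

open scoped NNReal

open MeasureTheory ProbabilityTheory

/-- Soft-thresholding (LSA) activation `φ_b(x) = max(0, x-b) - max(0, -x-b)`. -/
noncomputable def lsa (b x : ℝ) : ℝ := max 0 (x - b) - max 0 (-x - b)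

lemma lsa_zero (x : ℝ) : lsa 0 x = x := by
  simp only [lsa, sub_zero, max_def]; split_ifs <;> linarith

lemma abs_lsa_le {b : ℝ} (hb : 0 ≤ b) (x : ℝ) : |lsa b x| ≤ |x| := by
  rw [abs_le]
  rcases abs_cases x with ⟨h1, h2⟩ | ⟨h1, h2⟩ <;>
    rw [h1] <;> simp only [lsa, max_def] <;> constructor <;> split_ifs <;> linarith

lemma lsa_add_le_max {b : ℝ} (hb : 0 ≤ b) (x y : ℝ) :
    lsa b x + lsa b y ≤ max 0 (x + y) := by
  simp only [lsa, max_def]; split_ifs <;> linarith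

lemma lsa_neg (b x : ℝ) : lsa b (-x) = -lsa b x := by
  simp only [lsa, neg_neg]; ring

lemma lsa_of_abs_le {b x : ℝ} (h : |x| ≤ b) : lsa b x = 0 := by
  rcases abs_le.mp h with ⟨h1, h2⟩
  simp only [lsa]
  rw [max_eq_left (by linarith), max_eq_left (by linarith), sub_zero]

lemma continuous_lsa (b : ℝ) : Continuous (lsa b) := by unfold lsa; fun_prop

lemma gauss_map_neg : (gaussianReal 0 1).map (fun x => -x) = gaussianReal 0 1 := by
  have h := gaussianReal_map_const_mul (μ := 0) (v := 1) (-1)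
  simp only [neg_mul, one_mul, mul_zero] at h
  convert h using 2
  ext x; norm_num

lemma integrable_id_gauss : Integrable (fun x : ℝ => x) (gaussianReal 0 1) := by
  rw [gaussianReal_of_var_ne_zero 0 one_ne_zero,
    integrable_withDensity_iff (measurable_gaussianPDF 0 1)
      (ae_of_all _ fun x => ENNReal.ofReal_lt_top)]
  simp only [gaussianPDF, ENNReal.toReal_ofReal (gaussianPDFReal_nonneg 0 1 _)]
  unfold gaussianPDFReal
  have h := (integrable_mul_exp_neg_mul_sq (b := (2:ℝ)⁻¹) (by norm_num)).const_mul
    ((Real.sqrt (2 * Real.pi * 1))⁻¹)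
  have he : (fun x : ℝ => x * ((√(2 * Real.pi * (((1:ℝ≥0)):ℝ)))⁻¹ *
      Real.exp (-(x - 0) ^ 2 / (2 * (((1:ℝ≥0)):ℝ))))) =
      fun x : ℝ => (√(2 * Real.pi * 1))⁻¹ * (x * Real.exp (-2⁻¹ * x ^ 2)) := by
    ext x; push_cast; ring_nf
  rw [he]; exact h

/-- `sup_{b ≥ 0} E[φ_b(μ̄ + σ̄ ε)] = max(μ̄, 0)`; attained at `b = 0` if
`μ̄ > 0`, approached as `b → ∞` (limit `0`) if `μ̄ < 0`, and identically `0` if `μ̄ = 0`. -/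
theorem lsa_expectation_sup (μ σ : ℝ) (hσ : 0 < σ) :
    sSup ((fun b => ∫ x, lsa b (μ + σ * x) ∂(gaussianReal 0 1)) '' Set.Ici 0) = max μ 0 ∧
    (0 < μ → ∫ x, lsa 0 (μ + σ * x) ∂(gaussianReal 0 1) = max μ 0) ∧
    (μ < 0 → Filter.Tendsto (fun b => ∫ x, lsa b (μ + σ * x) ∂(gaussianReal 0 1))
      Filter.atTop (nhds 0)) ∧
    (μ = 0 → ∀ b : ℝ, 0 ≤ b → ∫ x, lsa b (μ + σ * x) ∂(gaussianReal 0 1) = 0) := by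
  set γ := gaussianReal 0 1 with hγ
  have hcont : ∀ (b c s : ℝ), Continuous (fun x => lsa b (c + s * x)) := fun b c s =>
    (continuous_lsa b).comp (by fun_prop)
  have habs : ∀ (c s : ℝ), Integrable (fun x => |c + s * x|) γ :=
    fun c s => ((integrable_const c).add (integrable_id_gauss.const_mul s)).abs
  have hInt : ∀ (b c s : ℝ), 0 ≤ b → Integrable (fun x => lsa b (c + s * x)) γ := by
    intro b c s hb
    exact (habs c s).mono' ((hcont b c s).aestronglyMeasurable)
      (ae_of_all _ fun x => by simpa using abs_lsa_le hb _)
  -- symmetry of the gaussian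
  have hmap : ∀ g : ℝ → ℝ, Continuous g → (∫ x, g x ∂γ) = ∫ x, g (-x) ∂γ := by
    intro g hg
    conv_lhs => rw [hγ, ← gauss_map_neg]
    rw [integral_map measurable_neg.aemeasurable hg.aestronglyMeasurable]
  have hsymm : ∀ b : ℝ, (∫ x, lsa b (μ + σ * x) ∂γ) = ∫ x, lsa b (μ + (-σ) * x) ∂γ := by
    intro b
    rw [hmap _ (hcont b μ σ)]
    congr 1; ext x; ring_nf
  -- value at b = 0
  have hmean : (∫ x, x ∂γ) = 0 := by
    have h := hmap (fun x => x) continuous_id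
    rw [integral_neg] at h
    linarith
  have hf0 : (∫ x, lsa 0 (μ + σ * x) ∂γ) = μ := by
    simp only [lsa_zero]
    rw [integral_add (integrable_const μ) (integrable_id_gauss.const_mul σ),
      integral_const_mul, hmean]
    simp [hγ]
  -- upper bound
  have hub : ∀ b : ℝ, 0 ≤ b → (∫ x, lsa b (μ + σ * x) ∂γ) ≤ max μ 0 := by
    intro b hb
    have h2 : (∫ x, lsa b (μ + σ * x) ∂γ) + (∫ x, lsa b (μ + σ * x) ∂γ) =
        ∫ x, (lsa b (μ + σ * x) + lsa b (μ + (-σ) * x)) ∂γ := by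
      rw [integral_add (hInt b μ σ hb) (hInt b μ (-σ) hb), ← hsymm b]
    have h3 : (∫ x, (lsa b (μ + σ * x) + lsa b (μ + (-σ) * x)) ∂γ) ≤
        ∫ _, max 0 (μ + μ) ∂γ := by
      refine integral_mono ((hInt b μ σ hb).add (hInt b μ (-σ) hb)) (integrable_const _) ?_
      intro x
      have := lsa_add_le_max hb (μ + σ * x) (μ + (-σ) * x)
      calc lsa b (μ + σ * x) + lsa b (μ + (-σ) * x) ≤ max 0 ((μ + σ * x) + (μ + (-σ) * x)) :=
            this
        _ = max 0 (μ + μ) := by ring_nf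
    rw [integral_const] at h3
    simp only [hγ, Measure.real, measure_univ, ENNReal.toReal_one, one_smul] at h3
    have hmax : max 0 (μ + μ) = max μ 0 + max μ 0 := by
      rcases le_total μ 0 with h | h
      · rw [max_eq_left (by linarith), max_eq_right h]; ring
      · rw [max_eq_right (by linarith), max_eq_left h]
    linarith [h2 ▸ h3, hmax ▸ (h2 ▸ h3)]
  -- tendsto 0 as b → ∞
  have htend : Filter.Tendsto (fun b => ∫ x, lsa b (μ + σ * x) ∂γ)
      Filter.atTop (nhds 0) := by
    have h0 : (0 : ℝ) = ∫ _, (0:ℝ) ∂γ := by simp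
    rw [h0]
    apply tendsto_integral_filter_of_dominated_convergence (fun x => |μ + σ * x|)
    · exact Filter.Eventually.of_forall fun b => (hcont b μ σ).aestronglyMeasurable
    · filter_upwards [Filter.eventually_ge_atTop (0:ℝ)] with b hb
      exact ae_of_all _ fun x => by simpa using abs_lsa_le hb _
    · exact habs μ σ
    · refine ae_of_all _ fun x => ?_
      apply Filter.Tendsto.congr' _ tendsto_const_nhds
      filter_upwards [Filter.eventually_ge_atTop (|μ + σ * x|)] with b hb
      exact (lsa_of_abs_le hb).symm
  -- sup
  have hsup : sSup ((fun b => ∫ x, lsa b (μ + σ * x) ∂γ) '' Set.Ici 0) = max μ 0 := by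
    rcases le_or_gt 0 μ with hμ | hμ
    · refine IsGreatest.csSup_eq ⟨⟨0, Set.self_mem_Ici, ?_⟩, ?_⟩
      · show (∫ x, lsa 0 (μ + σ * x) ∂γ) = max μ 0
        rw [hf0, max_eq_left hμ]
      · rintro y ⟨b, hb, rfl⟩; exact hub b hb
    · have hm : max μ 0 = 0 := max_eq_right hμ.le
      rw [hm]
      refine IsLUB.csSup_eq ⟨?_, ?_⟩ ⟨_, ⟨0, Set.self_mem_Ici, rfl⟩⟩
      · rintro y ⟨b, hb, rfl⟩
        have := hub b hb; rw [hm] at this; exact this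
      · intro M hM
        refine le_of_tendsto htend ?_
        filter_upwards [Filter.eventually_ge_atTop (0:ℝ)] with b hb
        exact hM ⟨b, hb, rfl⟩
  refine ⟨hsup, fun _ => by rw [hf0, max_eq_left (by linarith)], fun _ => htend, ?_⟩
  intro hμ0 b hb
  have h := hsymm b
  rw [hμ0] at h ⊢
  have he : (fun x => lsa b (0 + (-σ) * x)) = fun x => -lsa b (0 + σ * x) := by
    ext x
    rw [← lsa_neg]; ring_nf
  rw [he, integral_neg] at h
  linarith
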